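/- Let α > -1, 0 < q ≤ v < ∞, β > -1, and suppose (α+1)/q = (β+1)/v. If h : (0,∞) → [0,∞) is decreasing and for all γ ∈ (0,1] satisfies h(σ/γ) ≤ h(σ) for all σ > 0, and ∫_0^∞ h(σ)^q dμ_α(σ) < ∞, then ∫_0^∞ h(σ)^v dμ_β(σ) < ∞. -/

import Mathlib

open MeasureTheory

private lemma my_setLIntegral_mono {s : Set ℝ} (hs : MeasurableSet s) {f g : ℝ → ENNReal}
    (hfg : ∀ x ∈ s, f x ≤ g x) :
    ∫⁻ x in s, f x ≤ ∫⁻ x in s, g x :=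
  lintegral_mono_ae ((ae_restrict_iff' hs).mpr (Filter.Eventually.of_forall hfg))

/-- Sufficiency part (ii) of the embedding theorem, abstract form: if `0 < q ≤ v < ∞`,
`(α+1)/q = (β+1)/v`, and `h : (0,∞) → [0,∞)` is decreasing, satisfies
`h(σ/γ) ≤ h(σ)` for all `γ ∈ (0,1]` and `σ > 0`, and `∫_0^∞ h(σ)^q dμ_α(σ) < ∞`,
then `∫_0^∞ h(σ)^v dμ_β(σ) < ∞`. -/
theorem embedding_equal (α β q v : ℝ) (hα : -1 < α) (hβ : -1 < β)
    (hq : 0 < q) (hqv : q ≤ v) (heq : (α + 1) / q = (β + 1) / v)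
    (h : ℝ → ℝ) (hmono : AntitoneOn h (Set.Ioi 0)) (hpos : ∀ σ, 0 ≤ h σ)
    (hscale : ∀ γ ∈ Set.Ioc (0 : ℝ) 1, ∀ σ > (0 : ℝ), h (σ / γ) ≤ h σ)
    (hfin : (∫⁻ σ in Set.Ioi (0 : ℝ),
        ENNReal.ofReal (h σ ^ q *
          ((2 ^ (α + 1) / Real.Gamma (α + 1)) * σ ^ α * Real.exp (-2 * σ)))) < ⊤) :
    (∫⁻ σ in Set.Ioi (0 : ℝ),
        ENNReal.ofReal (h σ ^ v *
          ((2 ^ (β + 1) / Real.Gamma (β + 1)) * σ ^ β * Real.exp (-2 * σ)))) < ⊤ := by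
  have hv : (0:ℝ) < v := lt_of_lt_of_le hq hqv
  have hα1 : (0:ℝ) < α + 1 := by linarith
  have hβ1 : (0:ℝ) < β + 1 := by linarith
  set cα : ℝ := 2 ^ (α + 1) / Real.Gamma (α + 1) with hcα
  set cβ : ℝ := 2 ^ (β + 1) / Real.Gamma (β + 1) with hcβ
  have hcαpos : 0 < cα :=
    div_pos (Real.rpow_pos_of_pos two_pos _) (Real.Gamma_pos_of_pos hα1)
  have hcβpos : 0 < cβ :=
    div_pos (Real.rpow_pos_of_pos two_pos _) (Real.Gamma_pos_of_pos hβ1)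
  have hvq : (α + 1) * v = (β + 1) * q := (div_eq_div_iff hq.ne' hv.ne').mp heq
  have hexp : -(α + 1) * ((v - q) / q) = α - β := by
    field_simp
    nlinarith [hvq]
  set m : ℝ := min ((2:ℝ) ^ (-α)) 1 with hm
  have hmpos : 0 < m := lt_min (Real.rpow_pos_of_pos two_pos _) one_pos
  set d : ℝ := cα * m * Real.exp (-2) / 2 with hd
  have hdpos : 0 < d := by positivity
  set I := ∫⁻ σ in Set.Ioi (0:ℝ),
      ENNReal.ofReal (h σ ^ q * (cα * σ ^ α * Real.exp (-2 * σ))) with hI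
  set K := I.toReal / d with hK
  have hK0 : 0 ≤ K := div_nonneg ENNReal.toReal_nonneg hdpos.le
  -- Step 1: pointwise bound on (0,1]
  have hbound : ∀ σ ∈ Set.Ioc (0:ℝ) 1, h σ ^ q * σ ^ (α + 1) ≤ K := by
    intro σ hσ
    obtain ⟨hσ0, hσ1⟩ := hσ
    have hhalf : (0:ℝ) < σ / 2 := by linarith
    have hptwise : ∀ t ∈ Set.Ioc (σ/2) σ,
        h σ ^ q * (cα * (σ ^ α * m) * Real.exp (-2)) ≤
          h t ^ q * (cα * t ^ α * Real.exp (-2 * t)) := by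
      intro t ht
      have ht0 : (0:ℝ) < t := lt_trans hhalf ht.1
      have hht : h σ ≤ h t := hmono (Set.mem_Ioi.mpr ht0) (Set.mem_Ioi.mpr hσ0) ht.2
      have h1 : h σ ^ q ≤ h t ^ q := Real.rpow_le_rpow (hpos σ) hht hq.le
      have h2 : σ ^ α * m ≤ t ^ α := by
        rcases le_or_gt 0 α with hα' | hα'
        · have e1 : (σ/2) ^ α = σ ^ α * (2:ℝ) ^ (-α) := by
            rw [Real.div_rpow hσ0.le (by norm_num : (0:ℝ) ≤ 2),
              Real.rpow_neg (by norm_num : (0:ℝ) ≤ 2), div_eq_mul_inv]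
          calc σ ^ α * m ≤ σ ^ α * (2:ℝ) ^ (-α) :=
                mul_le_mul_of_nonneg_left (min_le_left _ _) (Real.rpow_nonneg hσ0.le α)
            _ = (σ/2) ^ α := e1.symm
            _ ≤ t ^ α := Real.rpow_le_rpow hhalf.le ht.1.le hα'
        · calc σ ^ α * m ≤ σ ^ α * 1 :=
                mul_le_mul_of_nonneg_left (min_le_right _ _) (Real.rpow_nonneg hσ0.le α)
            _ = σ ^ α := mul_one _
            _ ≤ t ^ α := Real.rpow_le_rpow_of_nonpos ht0 ht.2 hα'.le
      have h3 : Real.exp (-2) ≤ Real.exp (-2 * t) := by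
        apply Real.exp_le_exp.mpr
        nlinarith [ht.2]
      have hAB : cα * (σ ^ α * m) * Real.exp (-2) ≤ cα * t ^ α * Real.exp (-2 * t) :=
        mul_le_mul (mul_le_mul_of_nonneg_left h2 hcαpos.le) h3 (Real.exp_pos _).le
          (mul_nonneg hcαpos.le (Real.rpow_nonneg ht0.le α))
      exact mul_le_mul h1 hAB
        (mul_nonneg (mul_nonneg hcαpos.le
          (mul_nonneg (Real.rpow_nonneg hσ0.le α) hmpos.le)) (Real.exp_pos _).le)
        (Real.rpow_nonneg (hpos t) q)
    have key : ENNReal.ofReal ((h σ ^ q * (cα * (σ ^ α * m) * Real.exp (-2))) * (σ / 2)) ≤ I := by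
      have hsub : Set.Ioc (σ/2) σ ⊆ Set.Ioi (0:ℝ) := fun t ht => lt_trans hhalf ht.1
      have hnn : (0:ℝ) ≤ h σ ^ q * (cα * (σ ^ α * m) * Real.exp (-2)) :=
        mul_nonneg (Real.rpow_nonneg (hpos σ) q)
          (mul_nonneg (mul_nonneg hcαpos.le
            (mul_nonneg (Real.rpow_nonneg hσ0.le α) hmpos.le)) (Real.exp_pos _).le)
      calc ENNReal.ofReal ((h σ ^ q * (cα * (σ ^ α * m) * Real.exp (-2))) * (σ / 2))
          = ENNReal.ofReal (h σ ^ q * (cα * (σ ^ α * m) * Real.exp (-2)))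
              * volume (Set.Ioc (σ/2) σ) := by
            rw [Real.volume_Ioc, ENNReal.ofReal_mul hnn]
            congr 2
            ring
        _ = ∫⁻ _ in Set.Ioc (σ/2) σ,
              ENNReal.ofReal (h σ ^ q * (cα * (σ ^ α * m) * Real.exp (-2))) :=
            (setLIntegral_const _ _).symm
        _ ≤ ∫⁻ t in Set.Ioc (σ/2) σ,
              ENNReal.ofReal (h t ^ q * (cα * t ^ α * Real.exp (-2 * t))) :=
            my_setLIntegral_mono measurableSet_Ioc
              (fun t ht => ENNReal.ofReal_le_ofReal (hptwise t ht))
        _ ≤ I := lintegral_mono_set hsub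
    have hle : (h σ ^ q * (cα * (σ ^ α * m) * Real.exp (-2))) * (σ / 2) ≤ I.toReal :=
      (ENNReal.ofReal_le_iff_le_toReal hfin.ne).mp key
    have final : h σ ^ q * σ ^ (α + 1) * d ≤ I.toReal := by
      rw [Real.rpow_add_one hσ0.ne' α]
      calc h σ ^ q * (σ ^ α * σ) * d
          = (h σ ^ q * (cα * (σ ^ α * m) * Real.exp (-2))) * (σ / 2) := by
            rw [hd]; ring
        _ ≤ I.toReal := hle
    exact (le_div_iff₀ hdpos).mpr final
  -- Step 2: pointwise comparison on (0,1]
  have hpt : ∀ σ ∈ Set.Ioc (0:ℝ) 1,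
      h σ ^ v * (cβ * σ ^ β * Real.exp (-2 * σ)) ≤
        (K ^ ((v - q)/q) * cβ / cα) * (h σ ^ q * (cα * σ ^ α * Real.exp (-2 * σ))) := by
    intro σ hσ
    obtain ⟨hσ0, hσ1⟩ := hσ
    have hσα1 : (0:ℝ) < σ ^ (α + 1) := Real.rpow_pos_of_pos hσ0 _
    have hq1 : h σ ^ q ≤ K * σ ^ (-(α + 1)) := by
      rw [Real.rpow_neg hσ0.le, ← div_eq_mul_inv]
      exact (le_div_iff₀ hσα1).mpr (hbound σ ⟨hσ0, hσ1⟩)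
    have e : (h σ ^ q) ^ ((v - q)/q) = h σ ^ (v - q) := by
      rw [← Real.rpow_mul (hpos σ)]
      congr 1
      field_simp
    have hsplit : h σ ^ v = h σ ^ q * h σ ^ (v - q) :=
      Real.rpow_of_add_eq (hpos σ) hv.ne' (by ring)
    have h4 : h σ ^ (v - q) ≤ K ^ ((v - q)/q) * σ ^ (α - β) := by
      calc h σ ^ (v - q) = (h σ ^ q) ^ ((v - q)/q) := e.symm
        _ ≤ (K * σ ^ (-(α + 1))) ^ ((v - q)/q) :=
            Real.rpow_le_rpow (Real.rpow_nonneg (hpos σ) q) hq1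
              (div_nonneg (by linarith) hq.le)
        _ = K ^ ((v - q)/q) * (σ ^ (-(α + 1))) ^ ((v - q)/q) :=
            Real.mul_rpow hK0 (Real.rpow_nonneg hσ0.le _)
        _ = K ^ ((v - q)/q) * σ ^ (α - β) := by
            rw [← Real.rpow_mul hσ0.le, hexp]
    have hσab : σ ^ (α - β) * σ ^ β = σ ^ α := by
      rw [← Real.rpow_add hσ0]; ring_nf
    calc h σ ^ v * (cβ * σ ^ β * Real.exp (-2 * σ))
        = h σ ^ q * h σ ^ (v - q) * (cβ * σ ^ β * Real.exp (-2 * σ)) := by rw [hsplit]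
      _ ≤ h σ ^ q * (K ^ ((v - q)/q) * σ ^ (α - β)) * (cβ * σ ^ β * Real.exp (-2 * σ)) :=
          mul_le_mul_of_nonneg_right
            (mul_le_mul_of_nonneg_left h4 (Real.rpow_nonneg (hpos σ) q))
            (mul_nonneg (mul_nonneg hcβpos.le (Real.rpow_nonneg hσ0.le β))
              (Real.exp_pos _).le)
      _ = K ^ ((v - q)/q) * cβ * (h σ ^ q * ((σ ^ (α - β) * σ ^ β) * Real.exp (-2 * σ))) := by
          ring
      _ = K ^ ((v - q)/q) * cβ * (h σ ^ q * (σ ^ α * Real.exp (-2 * σ))) := by rw [hσab]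
      _ = (K ^ ((v - q)/q) * cβ / cα) * (h σ ^ q * (cα * σ ^ α * Real.exp (-2 * σ))) := by
          field_simp
  -- Part A : integral over (0,1]
  have partA : (∫⁻ σ in Set.Ioc (0:ℝ) 1,
      ENNReal.ofReal (h σ ^ v * (cβ * σ ^ β * Real.exp (-2 * σ)))) < ⊤ := by
    set C : ℝ := K ^ ((v - q)/q) * cβ / cα with hC
    have hC0 : (0:ℝ) ≤ C :=
      div_nonneg (mul_nonneg (Real.rpow_nonneg hK0 _) hcβpos.le) hcαpos.le
    calc (∫⁻ σ in Set.Ioc (0:ℝ) 1,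
          ENNReal.ofReal (h σ ^ v * (cβ * σ ^ β * Real.exp (-2 * σ))))
        ≤ ∫⁻ σ in Set.Ioc (0:ℝ) 1,
            ENNReal.ofReal C * ENNReal.ofReal (h σ ^ q * (cα * σ ^ α * Real.exp (-2 * σ))) := by
          apply my_setLIntegral_mono measurableSet_Ioc
          intro σ hσ
          rw [← ENNReal.ofReal_mul hC0]
          exact ENNReal.ofReal_le_ofReal (hpt σ hσ)
      _ = ENNReal.ofReal C * ∫⁻ σ in Set.Ioc (0:ℝ) 1,
            ENNReal.ofReal (h σ ^ q * (cα * σ ^ α * Real.exp (-2 * σ))) :=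
          lintegral_const_mul' _ _ ENNReal.ofReal_ne_top
      _ ≤ ENNReal.ofReal C * I := by
          gcongr
          exact lintegral_mono_set Set.Ioc_subset_Ioi_self
      _ < ⊤ := ENNReal.mul_lt_top ENNReal.ofReal_lt_top hfin
  -- Part B : integral over (1,∞)
  have partB : (∫⁻ σ in Set.Ioi (1:ℝ),
      ENNReal.ofReal (h σ ^ v * (cβ * σ ^ β * Real.exp (-2 * σ)))) < ⊤ := by
    have hint : IntegrableOn
        (fun t : ℝ => (h 1 ^ v * cβ) * (Real.exp (-t) * t ^ (β + 1 - 1))) (Set.Ioi 0) :=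
      (Real.GammaIntegral_convergent hβ1).const_mul _
    calc (∫⁻ σ in Set.Ioi (1:ℝ),
          ENNReal.ofReal (h σ ^ v * (cβ * σ ^ β * Real.exp (-2 * σ))))
        ≤ ∫⁻ σ in Set.Ioi (1:ℝ),
            ENNReal.ofReal ((h 1 ^ v * cβ) * (Real.exp (-σ) * σ ^ (β + 1 - 1))) := by
          apply my_setLIntegral_mono measurableSet_Ioi
          intro σ hσ
          apply ENNReal.ofReal_le_ofReal
          have hσ1 : (1:ℝ) < σ := hσ
          have hσ0 : (0:ℝ) < σ := lt_trans one_pos hσ1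
          have hhv : h σ ^ v ≤ h 1 ^ v :=
            Real.rpow_le_rpow (hpos σ)
              (hmono (Set.mem_Ioi.mpr one_pos) (Set.mem_Ioi.mpr hσ0) hσ1.le) hv.le
          have hexp2 : Real.exp (-2 * σ) ≤ Real.exp (-σ) := by
            apply Real.exp_le_exp.mpr
            linarith
          have hb : β + 1 - 1 = β := by ring
          rw [hb]
          calc h σ ^ v * (cβ * σ ^ β * Real.exp (-2 * σ))
              ≤ h 1 ^ v * (cβ * σ ^ β * Real.exp (-σ)) :=
                mul_le_mul hhv
                  (mul_le_mul_of_nonneg_left hexp2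
                    (mul_nonneg hcβpos.le (Real.rpow_nonneg hσ0.le β)))
                  (mul_nonneg (mul_nonneg hcβpos.le (Real.rpow_nonneg hσ0.le β))
                    (Real.exp_pos _).le)
                  (Real.rpow_nonneg (hpos 1) v)
            _ = (h 1 ^ v * cβ) * (Real.exp (-σ) * σ ^ β) := by ring
      _ ≤ ∫⁻ σ in Set.Ioi (0:ℝ),
            ENNReal.ofReal ((h 1 ^ v * cβ) * (Real.exp (-σ) * σ ^ (β + 1 - 1))) :=
          lintegral_mono_set (fun x hx => Set.mem_Ioi.mpr (lt_trans one_pos (Set.mem_Ioi.mp hx)))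
      _ < ⊤ := hint.lintegral_lt_top
  -- Assemble
  calc (∫⁻ σ in Set.Ioi (0:ℝ),
        ENNReal.ofReal (h σ ^ v * (cβ * σ ^ β * Real.exp (-2 * σ))))
      = ∫⁻ σ in Set.Ioc (0:ℝ) 1 ∪ Set.Ioi 1,
          ENNReal.ofReal (h σ ^ v * (cβ * σ ^ β * Real.exp (-2 * σ))) := by
        rw [Set.Ioc_union_Ioi_eq_Ioi zero_le_one]
    _ ≤ (∫⁻ σ in Set.Ioc (0:ℝ) 1,
          ENNReal.ofReal (h σ ^ v * (cβ * σ ^ β * Real.exp (-2 * σ)))) +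
        ∫⁻ σ in Set.Ioi (1:ℝ),
          ENNReal.ofReal (h σ ^ v * (cβ * σ ^ β * Real.exp (-2 * σ))) :=
        lintegral_union_le _ _ _
    _ < ⊤ := ENNReal.add_lt_top.mpr ⟨partA, partB⟩
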